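/- Let X be a real Banach space with dim X ≥ 2 and let M : X* → X* be a bijection such that for every x ∈ X both u ↦ ⟨M(u), x⟩ and u ↦ ⟨M⁻¹(u), x⟩ are quasiconvex on X*. Then M is affine. -/

import Mathlib

open Set

noncomputable section

variable {X : Type*}

/-- The class of proper, lower semicontinuous, convex functions `X → ℝ ∪ {+∞}`,
encoded as `EReal`-valued functions never taking the value `⊥`. -/
def IsClFun (X : Type*) [NormedAddCommGroup X] [NormedSpace ℝ X] (f : X → EReal) : Prop :=
  (∀ x, f x ≠ ⊥) ∧ (∃ x, f x ≠ ⊤) ∧ LowerSemicontinuous f ∧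
  ∀ x y : X, ∀ a b : ℝ, 0 ≤ a → 0 ≤ b → a + b = 1 →
    f (a • x + b • y) ≤ (a : EReal) * f x + (b : EReal) * f y

/-- `C(X)`, as a subtype. -/
abbrev Cl (X : Type*) [NormedAddCommGroup X] [NormedSpace ℝ X] :=
  {f : X → EReal // IsClFun X f}

/-- The continuous affine function `h_{u,α}(x) = ⟨u,x⟩ + α`. -/
def aff [NormedAddCommGroup X] [NormedSpace ℝ X] (u : X →L[ℝ] ℝ) (α : ℝ) : X → EReal :=
  fun x => ((u x + α : ℝ) : EReal)

theorem affMem [NormedAddCommGroup X] [NormedSpace ℝ X] (u : X →L[ℝ] ℝ) (α : ℝ) :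
    IsClFun X (aff u α) := by
  refine ⟨fun x => EReal.coe_ne_bot _, ⟨0, EReal.coe_ne_top _⟩, ?_, ?_⟩
  · exact (continuous_coe_real_ereal.comp (by continuity)).lowerSemicontinuous
  · intro x y a b ha hb hab
    simp only [aff, map_add, map_smul, smul_eq_mul]
    rw [← EReal.coe_mul, ← EReal.coe_mul, ← EReal.coe_add, EReal.coe_le_coe_iff]
    have h : a * α + b * α = α := by rw [← add_mul, hab, one_mul]
    nlinarith

/-- `h_{u,α}` as an element of `C(X)`. -/
def affCl [NormedAddCommGroup X] [NormedSpace ℝ X] (u : X →L[ℝ] ℝ) (α : ℝ) : Cl X :=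
  ⟨aff u α, affMem u α⟩

/-- An operator on `C(X)` is fully order preserving if it is onto and
`f ≤ g ↔ T f ≤ T g` (pointwise order). -/
def FullyOrderPreserving [NormedAddCommGroup X] [NormedSpace ℝ X]
    (T : Cl X → Cl X) : Prop :=
  Function.Surjective T ∧ ∀ f g : Cl X, f.1 ≤ g.1 ↔ (T f).1 ≤ (T g).1


/-- A real-valued function on the dual is quasiconvex. -/
def QCvx [NormedAddCommGroup X] [NormedSpace ℝ X] (φ : (X →L[ℝ] ℝ) → ℝ) : Prop :=
  ∀ u v : X →L[ℝ] ℝ, ∀ s : ℝ, 0 ≤ s → s ≤ 1 →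
    φ (s • u + (1 - s) • v) ≤ max (φ u) (φ v)

section Aux
variable [NormedAddCommGroup X] [NormedSpace ℝ X]

/-- `p` lies on the line through `a` and `b`. -/
def OnLine (a b p : X →L[ℝ] ℝ) : Prop := ∃ r : ℝ, p = a + r • (b - a)

lemma product_lemma (A B : X →L[ℝ] ℝ) (h : ∀ x, A x * B x ≤ 0) :
    A = 0 ∨ B = 0 ∨ ∃ c : ℝ, c ≤ 0 ∧ B = c • A := by
  by_cases hA : A = 0
  · exact Or.inl hA
  refine Or.inr (Or.inr ?_)
  obtain ⟨x₀, hx₀⟩ : ∃ x, A x ≠ 0 := by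
    by_contra hcon; push_neg at hcon
    exact hA (ContinuousLinearMap.ext fun x => by simp [hcon x])
  have main : B = (B x₀ / A x₀) • A := by
    by_contra hcon
    obtain ⟨x₁, hx₁⟩ : ∃ x, B x ≠ (B x₀ / A x₀) * A x := by
      by_contra hc; push_neg at hc
      exact hcon (ContinuousLinearMap.ext fun x => by
        simp [ContinuousLinearMap.smul_apply, (hc x).symm])
    set y := x₁ - (A x₁ / A x₀) • x₀ with hy
    have hAy : A y = 0 := by
      simp only [hy, map_sub, map_smul, smul_eq_mul]
      field_simp
      ring
    have hBy : B y ≠ 0 := by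
      simp only [hy, map_sub, map_smul, smul_eq_mul]
      intro hEq
      apply hx₁
      have : B x₁ = A x₁ / A x₀ * B x₀ := by linarith
      rw [this]; field_simp
    set z := (1 / A x₀) • x₀ + ((1 - B ((1 / A x₀) • x₀)) / B y) • y with hz
    have hAz : A z = 1 := by
      simp only [hz, map_add, map_smul, smul_eq_mul, hAy]
      field_simp
      ring
    have hBz : B z = 1 := by
      simp only [hz, map_add, map_smul, smul_eq_mul]
      field_simp
      ring
    have := h z
    rw [hAz, hBz] at this
    norm_num at this
  refine ⟨B x₀ / A x₀, ?_, main⟩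
  have h0 := h x₀
  have hB0 : B x₀ = (B x₀ / A x₀) * A x₀ := by field_simp
  have hsq : 0 < A x₀ * A x₀ := mul_self_pos.mpr hx₀
  by_contra hpos
  push_neg at hpos
  have hrw : A x₀ * B x₀ = (B x₀ / A x₀) * (A x₀ * A x₀) := by
    field_simp
  rw [hrw] at h0
  nlinarith [mul_pos hpos hsq]

lemma seg (F : (X →L[ℝ] ℝ) → (X →L[ℝ] ℝ)) (hF : ∀ x : X, QCvx fun u => F u x)
    (u v : X →L[ℝ] ℝ) (s : ℝ) (hs0 : 0 ≤ s) (hs1 : s ≤ 1) :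
    ∃ t : ℝ, 0 ≤ t ∧ t ≤ 1 ∧ F (s • u + (1 - s) • v) = t • F u + (1 - t) • F v := by
  set w := s • u + (1 - s) • v with hw
  have key : ∀ x, (F w - F u) x * (F w - F v) x ≤ 0 := by
    intro x
    have h1 : F w x ≤ max (F u x) (F v x) := hF x u v s hs0 hs1
    have h2 : F w (-x) ≤ max (F u (-x)) (F v (-x)) := hF (-x) u v s hs0 hs1
    simp only [map_neg] at h2
    simp only [ContinuousLinearMap.sub_apply]
    rcases le_total (F u x) (F v x) with h | h
    · have hle : F w x ≤ F v x := h1.trans_eq (max_eq_right h)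
      have hge : F u x ≤ F w x := by
        have := h2.trans_eq (max_eq_left (neg_le_neg h))
        linarith
      nlinarith
    · have hle : F w x ≤ F u x := h1.trans_eq (max_eq_left h)
      have hge : F v x ≤ F w x := by
        have := h2.trans_eq (max_eq_right (neg_le_neg h))
        linarith
      nlinarith
  rcases product_lemma _ _ key with h | h | ⟨c, hc, hB⟩
  · rw [sub_eq_zero] at h
    exact ⟨1, zero_le_one, le_refl 1, by rw [h]; module⟩
  · rw [sub_eq_zero] at h
    exact ⟨0, le_refl 0, zero_le_one, by rw [h]; module⟩
  · have h1c : (0:ℝ) < 1 - c := by linarith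
    refine ⟨-c / (1 - c), div_nonneg (by linarith) h1c.le,
      (div_le_one h1c).2 (by linarith), ?_⟩
    have hkey : (1 - c) • F w = (-c) • F u + (1:ℝ) • F v := by
      linear_combination (norm := module) hB
    calc F w = (1 - c)⁻¹ • ((1 - c) • F w) := (inv_smul_smul₀ (ne_of_gt h1c) _).symm
      _ = (1 - c)⁻¹ • ((-c) • F u + (1:ℝ) • F v) := by rw [hkey]
      _ = (-c / (1 - c)) • F u + (1 - -c / (1 - c)) • F v := by
          match_scalars <;> field_simp <;> ring

lemma lineA (F : (X →L[ℝ] ℝ) → (X →L[ℝ] ℝ)) (hF : ∀ x : X, QCvx fun u => F u x)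
    (hFinj : Function.Injective F) (a b p : X →L[ℝ] ℝ) (hab : a ≠ b)
    (hp : OnLine a b p) : OnLine (F a) (F b) (F p) := by
  obtain ⟨r, hr⟩ := hp
  by_cases h0 : 0 ≤ r
  · by_cases h1 : r ≤ 1
    · have hpe : p = r • b + (1 - r) • a := by rw [hr]; module
      obtain ⟨t, ht0, ht1, hFt⟩ := seg F hF b a r h0 h1
      rw [← hpe] at hFt
      exact ⟨t, by rw [hFt]; module⟩
    · push_neg at h1
      have hrpos : (0:ℝ) < r := by linarith
      have hrne : r ≠ 0 := ne_of_gt hrpos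
      have hbe : b = (1/r) • p + (1 - 1/r) • a := by
        rw [hr]; match_scalars <;> field_simp <;> ring
      obtain ⟨t, ht0, ht1, hFt⟩ := seg F hF p a (1/r)
        (div_nonneg zero_le_one hrpos.le) (by rw [div_le_one hrpos]; linarith)
      rw [← hbe] at hFt
      have htne : t ≠ 0 := by
        intro h
        rw [h] at hFt
        apply hab
        apply hFinj
        rw [hFt]; module
      refine ⟨1/t, ?_⟩
      rw [hFt]
      match_scalars <;> field_simp <;> ring
  · push_neg at h0
    have h1r : (0:ℝ) < 1 - r := by linarith
    have hrne : (1:ℝ) - r ≠ 0 := ne_of_gt h1r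
    have hae : a = (1/(1-r)) • p + (1 - 1/(1-r)) • b := by
      rw [hr]; match_scalars <;> field_simp <;> ring
    obtain ⟨t, ht0, ht1, hFt⟩ := seg F hF p b (1/(1-r))
      (div_nonneg zero_le_one h1r.le) (by rw [div_le_one h1r]; linarith)
    rw [← hae] at hFt
    have htne : t ≠ 0 := by
      intro h
      rw [h] at hFt
      apply hab
      apply hFinj
      rw [hFt]; module
    refine ⟨1 - 1/t, ?_⟩
    rw [hFt]
    match_scalars <;> field_simp <;> ring

end Aux

section Aux2
variable [NormedAddCommGroup X] [NormedSpace ℝ X]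

lemma exists_offline (hdim : 2 ≤ Module.rank ℝ X) (a b : X →L[ℝ] ℝ) :
    ∃ w, ¬ OnLine a b w := by
  by_contra hcon
  push_neg at hcon
  obtain ⟨r₀, hr₀⟩ := hcon 0
  have hall : ∀ f : X →L[ℝ] ℝ, ∃ c : ℝ, f = c • (b - a) := by
    intro f
    obtain ⟨r, hr⟩ := hcon f
    exact ⟨r - r₀, by linear_combination (norm := module) hr - hr₀⟩
  have hnot : ¬ Module.rank ℝ X ≤ 1 := fun h =>
    absurd (hdim.trans h) (by norm_num)
  rw [rank_le_one_iff] at hnot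
  push_neg at hnot
  by_cases hd : b - a = 0
  · obtain ⟨x, hx⟩ := hnot 0
    have hxne : x ≠ 0 := fun h => hx 0 (by rw [h, smul_zero])
    obtain ⟨f, hf⟩ := SeparatingDual.exists_ne_zero (R := ℝ) hxne
    obtain ⟨c, hc⟩ := hall f
    rw [hd, smul_zero] at hc
    rw [hc] at hf
    simp at hf
  · obtain ⟨x₀, hx₀⟩ : ∃ x, (b - a) x ≠ 0 := by
      by_contra hc; push_neg at hc
      exact hd (ContinuousLinearMap.ext fun x => by simp [hc x])
    obtain ⟨x₁, hx₁⟩ := hnot x₀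
    set y := x₁ - ((b - a) x₁ / (b - a) x₀) • x₀ with hy
    have hyne : y ≠ 0 := by
      intro h
      apply hx₁ ((b - a) x₁ / (b - a) x₀)
      rw [hy] at h
      exact (sub_eq_zero.mp h).symm
    have hx₀' : b x₀ - a x₀ ≠ 0 := by simpa using hx₀
    have hdy : (b - a) y = 0 := by
      simp only [hy, map_sub, map_smul, smul_eq_mul, ContinuousLinearMap.sub_apply]
      field_simp
      ring
    obtain ⟨f, hf⟩ := SeparatingDual.exists_ne_zero (R := ℝ) hyne
    obtain ⟨c, hc⟩ := hall f
    rw [hc] at hf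
    simp only [ContinuousLinearMap.smul_apply, smul_eq_mul, hdy, mul_zero] at hf
    exact hf rfl

end Aux2

section Aux3
variable [NormedAddCommGroup X] [NormedSpace ℝ X]
set_option maxHeartbeats 1000000 in
lemma midpoint_pres (hdim : 2 ≤ Module.rank ℝ X)
    (M g : (X →L[ℝ] ℝ) → (X →L[ℝ] ℝ))
    (hqM : ∀ x : X, QCvx fun u => M u x) (hqg : ∀ x : X, QCvx fun u => g u x)
    (hMinj : Function.Injective M) (hginj : Function.Injective g)
    (hgl : Function.LeftInverse g M) (u v : X →L[ℝ] ℝ) :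
    M ((1/2 : ℝ) • u + (1/2 : ℝ) • v) = (1/2 : ℝ) • M u + (1/2 : ℝ) • M v := by
  by_cases huv : u = v
  · subst huv
    have e : (1/2 : ℝ) • u + (1/2 : ℝ) • u = u := by module
    rw [e]; module
  obtain ⟨w, hw⟩ := exists_offline hdim u v
  have hwu : w ≠ u := fun h => hw ⟨0, by rw [h]; module⟩
  have hwv : w ≠ v := fun h => hw ⟨1, by rw [h]; module⟩
  have lineg : ∀ a b p, a ≠ b → OnLine a b p → OnLine (g a) (g b) (g p) :=
    fun a b p => lineA g hqg hginj a b p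
  have lineM : ∀ a b p, a ≠ b → OnLine a b p → OnLine (M a) (M b) (M p) :=
    fun a b p => lineA M hqM hMinj a b p
  have hMuv : M u ≠ M v := fun h => huv (hMinj h)
  have hMoff : ¬ OnLine (M u) (M v) (M w) := by
    intro h
    have h2 := lineg _ _ _ hMuv h
    rw [hgl u, hgl v, hgl w] at h2
    exact hw h2
  have indep : ∀ a b : ℝ, a • (M v - M u) + b • (M w - M u) = 0 → a = 0 ∧ b = 0 := by
    intro a b hab
    by_cases hb : b = 0
    · refine ⟨?_, hb⟩
      rw [hb, zero_smul, add_zero] at hab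
      by_contra ha
      apply hMuv
      have hD1 : M v - M u = 0 := by
        calc M v - M u = a⁻¹ • (a • (M v - M u)) := (inv_smul_smul₀ ha _).symm
          _ = a⁻¹ • 0 := by rw [hab]
          _ = 0 := smul_zero _
      exact (sub_eq_zero.mp hD1).symm
    · exfalso
      apply hMoff
      have hD2 : M w - M u = (b⁻¹ * (-a)) • (M v - M u) := by
        have step : b • (M w - M u) = (-a) • (M v - M u) := by
          linear_combination (norm := module) hab
        rw [← smul_smul, ← step, inv_smul_smul₀ hb]
      exact ⟨b⁻¹ * (-a), by rw [← hD2]; module⟩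
  obtain ⟨ρ, hρ⟩ := lineM w u (w + (2:ℝ) • (u - w)) hwu ⟨2, rfl⟩
  obtain ⟨σ, hσ⟩ := lineM w v (w + (2:ℝ) • (v - w)) hwv ⟨2, rfl⟩
  have hpq : w + (2:ℝ) • (u - w) ≠ w + (2:ℝ) • (v - w) := by
    intro h
    apply huv
    have h2 : (2:ℝ) • u = (2:ℝ) • v := by linear_combination (norm := module) h
    calc u = (2:ℝ)⁻¹ • ((2:ℝ) • u) := (inv_smul_smul₀ two_ne_zero u).symm
      _ = (2:ℝ)⁻¹ • ((2:ℝ) • v) := by rw [h2]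
      _ = v := inv_smul_smul₀ two_ne_zero v
  obtain ⟨τ, hτ⟩ := lineM _ _ (u + v - w) hpq ⟨1/2, by module⟩
  obtain ⟨y, z, hyz⟩ : ∃ y z : ℝ, M (u + v - w)
      = M u + y • (M v - M u) + z • (M w - M u) :=
    ⟨τ*σ, 1 - ρ - τ*σ + τ*ρ, by rw [hτ, hρ, hσ]; module⟩
  have hdisj1 : ∀ zp, OnLine u w zp → OnLine v (u + v - w) zp → False := by
    rintro zp ⟨a, ha⟩ ⟨b, hb⟩
    have hv : v = u + (a + b) • (w - u) := by
      linear_combination (norm := module) ha - hb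
    rcases eq_or_ne (a + b) 0 with h | h
    · rw [h, zero_smul, add_zero] at hv
      exact huv hv.symm
    · apply hw
      refine ⟨(a+b)⁻¹, ?_⟩
      rw [hv]
      match_scalars <;> field_simp <;> ring
  have hMdisj1 : ∀ zp, OnLine (M u) (M w) zp →
      OnLine (M v) (M (u + v - w)) zp → False := by
    intro zp h1 h2
    have hMuw : M u ≠ M w := fun h => hwu (hMinj h).symm
    have hvw' : v ≠ u + v - w := by
      intro h
      apply hwu
      have h3 : w = u := by linear_combination (norm := module) h
      exact h3
    have hMvw' : M v ≠ M (u + v - w) := fun h => hvw' (hMinj h)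
    have g1 := lineg _ _ _ hMuw h1
    have g2 := lineg _ _ _ hMvw' h2
    rw [hgl u, hgl w] at g1
    rw [hgl v, hgl (u + v - w)] at g2
    exact hdisj1 (g zp) g1 g2
  have hy1 : y = 1 := by
    by_contra hy
    have hne : (1:ℝ) - y ≠ 0 := sub_ne_zero.mpr (fun h => hy h.symm)
    refine hMdisj1 (M u + (z/(1-y)) • (M w - M u)) ⟨z/(1-y), rfl⟩ ⟨1/(1-y), ?_⟩
    rw [hyz]
    match_scalars <;> field_simp <;> ring
  have hdisj2 : ∀ zp, OnLine v w zp → OnLine u (u + v - w) zp → False := by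
    rintro zp ⟨a, ha⟩ ⟨b, hb⟩
    have hu : u = v + (a + b) • (w - v) := by
      linear_combination (norm := module) ha - hb
    rcases eq_or_ne (a + b) 0 with h | h
    · rw [h, zero_smul, add_zero] at hu
      exact huv hu
    · apply hw
      refine ⟨1 - (a+b)⁻¹, ?_⟩
      rw [hu]
      match_scalars <;> field_simp <;> ring
  have hMdisj2 : ∀ zp, OnLine (M v) (M w) zp →
      OnLine (M u) (M (u + v - w)) zp → False := by
    intro zp h1 h2
    have hMvw : M v ≠ M w := fun h => hwv (hMinj h).symm
    have huw' : u ≠ u + v - w := by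
      intro h
      apply hwv
      have h3 : w = v := by linear_combination (norm := module) h
      exact h3
    have hMuw' : M u ≠ M (u + v - w) := fun h => huw' (hMinj h)
    have g1 := lineg _ _ _ hMvw h1
    have g2 := lineg _ _ _ hMuw' h2
    rw [hgl v, hgl w] at g1
    rw [hgl u, hgl (u + v - w)] at g2
    exact hdisj2 (g zp) g1 g2
  rw [hy1] at hyz
  have hz1 : z = -1 := by
    by_contra hz
    have hne : (1:ℝ) + z ≠ 0 := fun h => hz (by linarith)
    refine hMdisj2 (M v + (z/(1+z)) • (M w - M v)) ⟨z/(1+z), rfl⟩ ⟨1/(1+z), ?_⟩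
    rw [hyz]
    match_scalars <;> field_simp <;> ring
  rw [hz1] at hyz
  have hww' : w ≠ u + v - w := by
    intro h
    apply hw
    have h2 : (2:ℝ) • w = u + v := by linear_combination (norm := module) h
    refine ⟨1/2, ?_⟩
    calc w = (2:ℝ)⁻¹ • ((2:ℝ) • w) := (inv_smul_smul₀ two_ne_zero w).symm
      _ = (2:ℝ)⁻¹ • (u + v) := by rw [h2]
      _ = u + (1/2:ℝ) • (v - u) := by module
  obtain ⟨α, hα⟩ := lineM u v ((1/2:ℝ) • u + (1/2:ℝ) • v) huv ⟨1/2, by module⟩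
  obtain ⟨β, hβ⟩ := lineM w (u + v - w) ((1/2:ℝ) • u + (1/2:ℝ) • v) hww' ⟨1/2, by module⟩
  rw [hyz] at hβ
  have hcomb : (α - β) • (M v - M u) + (2*β - 1) • (M w - M u) = 0 := by
    linear_combination (norm := module) hβ - hα
  obtain ⟨h1, h2⟩ := indep _ _ hcomb
  have hα2 : α = 1/2 := by linarith
  rw [hα2] at hα
  rw [hα]; module
end Aux3

set_option maxHeartbeats 1000000 in
theorem quasiconvex_bijection_affine
    [NormedAddCommGroup X] [NormedSpace ℝ X] [CompleteSpace X]
    (hdim : 2 ≤ Module.rank ℝ X)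
    (M g : (X →L[ℝ] ℝ) → (X →L[ℝ] ℝ))
    (hbij : Function.Bijective M)
    (hgl : Function.LeftInverse g M) (hgr : Function.RightInverse g M)
    (hq : ∀ x : X, QCvx (fun u => M u x) ∧ QCvx (fun u => g u x)) :
    ∀ (u v : X →L[ℝ] ℝ) (s : ℝ), 0 ≤ s → s ≤ 1 →
      M (s • u + (1 - s) • v) = s • M u + (1 - s) • M v := by
  intro u v s hs0 hs1
  have hqM : ∀ x : X, QCvx fun u => M u x := fun x => (hq x).1
  have hqg : ∀ x : X, QCvx fun u => g u x := fun x => (hq x).2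
  have hMinj : Function.Injective M := hbij.1
  have hginj : Function.Injective g := hgr.injective
  have hmid := midpoint_pres hdim M g hqM hqg hMinj hginj hgl
  by_cases huv : u = v
  · subst huv
    have e : s • u + (1 - s) • u = u := by module
    rw [e]; module
  have hMuv : M u ≠ M v := fun h => huv (hMinj h)
  have uniq : ∀ t₁ t₂ : ℝ,
      t₁ • M u + (1 - t₁) • M v = t₂ • M u + (1 - t₂) • M v → t₁ = t₂ := by
    intro t₁ t₂ h
    by_contra hne
    apply hMuv
    have h12 : (t₁ - t₂) • (M u - M v) = 0 := by
      linear_combination (norm := module) h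
    have : M u - M v = 0 := by
      calc M u - M v = (t₁ - t₂)⁻¹ • ((t₁ - t₂) • (M u - M v)) :=
            (inv_smul_smul₀ (sub_ne_zero.mpr hne) _).symm
        _ = 0 := by rw [h12, smul_zero]
    exact sub_eq_zero.mp this
  have Dy : ∀ n : ℕ, ∀ k : ℕ, k ≤ 2^n →
      M (((k:ℝ)/2^n) • u + (1 - (k:ℝ)/2^n) • v)
        = ((k:ℝ)/2^n) • M u + (1 - (k:ℝ)/2^n) • M v := by
    intro n
    induction n with
    | zero =>
      intro k hk
      interval_cases k
      · have e : ((0:ℕ):ℝ)/2^0 = 0 := by norm_num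
        rw [e]
        norm_num
      · have e : ((1:ℕ):ℝ)/2^0 = 1 := by norm_num
        rw [e]
        norm_num
    | succ n ih =>
      intro k hk
      rcases Nat.even_or_odd k with ⟨j, hj⟩ | ⟨j, hj⟩
      · subst hj
        have hj2 : j ≤ 2^n := by omega
        have h2n : (2:ℝ)^n ≠ 0 := by positivity
        have he : ((j + j : ℕ):ℝ)/2^(n+1) = (j:ℝ)/2^n := by
          push_cast
          field_simp
          ring
        rw [he]
        exact ih j hj2
      · subst hj
        have hj2 : j + 1 ≤ 2^n := by omega
        have hj3 : j ≤ 2^n := by omega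
        have h2n : (2:ℝ)^n ≠ 0 := by positivity
        have e1 : (((2*j+1 : ℕ):ℝ)/2^(n+1)) • u + (1 - ((2*j+1 : ℕ):ℝ)/2^(n+1)) • v
            = (1/2:ℝ) • (((j:ℝ)/2^n) • u + (1 - (j:ℝ)/2^n) • v)
              + (1/2:ℝ) • ((((j+1 : ℕ):ℝ)/2^n) • u + (1 - ((j+1 : ℕ):ℝ)/2^n) • v) := by
          match_scalars <;> push_cast <;> field_simp <;> ring
        rw [e1, hmid, ih j hj3, ih (j+1) hj2]
        match_scalars <;> push_cast <;> field_simp <;> ring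
  obtain ⟨t, ht0, ht1, hMt⟩ := seg M hqM u v s hs0 hs1
  suffices hts : t = s by rw [hMt, hts]
  have bracket : ∀ a b : ℝ, a ≤ s → s ≤ b → a < b →
      M (a • u + (1-a) • v) = a • M u + (1-a) • M v →
      M (b • u + (1-b) • v) = b • M u + (1-b) • M v →
      a ≤ t ∧ t ≤ b := by
    intro a b has hsb hab hGa hGb
    have hbne : b - a ≠ 0 := ne_of_gt (by linarith)
    have hl0 : 0 ≤ (s - a)/(b - a) := div_nonneg (by linarith) (by linarith)
    have hl1 : (s - a)/(b - a) ≤ 1 := (div_le_one (by linarith)).2 (by linarith)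
    obtain ⟨τ, hτ0, hτ1, hτ⟩ :=
      seg M hqM (b • u + (1-b) • v) (a • u + (1-a) • v) ((s - a)/(b - a)) hl0 hl1
    have e2 : ((s - a)/(b - a)) • (b • u + (1-b) • v)
        + (1 - (s - a)/(b - a)) • (a • u + (1-a) • v) = s • u + (1 - s) • v := by
      match_scalars <;> field_simp [hbne] <;> ring
    rw [e2, hGa, hGb] at hτ
    have hτ' : M (s • u + (1-s) • v)
        = (τ*b + (1-τ)*a) • M u + (1 - (τ*b + (1-τ)*a)) • M v := by
      rw [hτ]; match_scalars <;> ring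
    have ht : t = τ*b + (1-τ)*a :=
      uniq _ _ (hMt.symm.trans hτ')
    constructor
    · nlinarith [mul_nonneg hτ0 (by linarith : (0:ℝ) ≤ b - a)]
    · nlinarith [mul_nonneg (by linarith : (0:ℝ) ≤ 1 - τ)
        (by linarith : (0:ℝ) ≤ b - a)]
  by_cases hs1' : s = 1
  · subst hs1'
    have h1 : M ((1:ℝ) • u + ((1:ℝ) - 1) • v) = (1:ℝ) • M u + ((1:ℝ)-1) • M v := by
      norm_num
    exact uniq t 1 (hMt.symm.trans h1)
  have hslt : s < 1 := lt_of_le_of_ne hs1 hs1'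
  have key : ∀ n : ℕ, (1:ℝ)/2^n < 1 - s → |t - s| ≤ 1/2^n := by
    intro n hn
    have h2n : (0:ℝ) < 2^n := by positivity
    set k := ⌊s * 2^n⌋₊ with hk
    have haw : (k:ℝ) ≤ s * 2^n := Nat.floor_le (by positivity)
    have ha : (k:ℝ)/2^n ≤ s := by rw [div_le_iff₀ h2n]; exact haw
    have hbw : s * 2^n < (k:ℝ) + 1 := Nat.lt_floor_add_one (s * 2^n)
    have hb : s < (k:ℝ)/2^n + 1/2^n := by
      rw [show (k:ℝ)/2^n + 1/2^n = ((k:ℝ)+1)/2^n by ring, lt_div_iff₀ h2n]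
      exact hbw
    have hb1 : (k:ℝ)/2^n + 1/2^n < 1 := by linarith
    have hk2 : k ≤ 2^n := by
      have h1 : (k:ℝ) ≤ 2^n := by nlinarith
      exact_mod_cast h1
    have hk2' : k + 1 ≤ 2^n := by
      have h1 : ((k:ℝ)+1) < 2^n := by
        have := (div_lt_one h2n).mp (by rw [show ((k:ℝ)+1)/2^n = (k:ℝ)/2^n + 1/2^n by ring]; exact hb1)
        exact this
      have h2 : ((k+1 : ℕ):ℝ) < ((2^n : ℕ):ℝ) := by push_cast; exact h1
      exact_mod_cast h2.le
    have hGa := Dy n k hk2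
    have hGb := Dy n (k+1) hk2'
    have he : ((k+1 : ℕ):ℝ)/2^n = (k:ℝ)/2^n + 1/2^n := by push_cast; ring
    rw [he] at hGb
    have hbr := bracket ((k:ℝ)/2^n) ((k:ℝ)/2^n + 1/2^n) ha hb.le
      (by have : (0:ℝ) < 1/2^n := by positivity
          linarith) hGa hGb
    rw [abs_le]
    constructor <;> [skip; skip] <;> obtain ⟨h1, h2⟩ := hbr <;> linarith
  by_contra hne
  have habs : 0 < |t - s| := abs_pos.mpr (sub_ne_zero.mpr hne)
  obtain ⟨n, hn⟩ := exists_pow_lt_of_lt_one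
    (lt_min habs (by linarith : (0:ℝ) < 1 - s)) (by norm_num : (1:ℝ)/2 < 1)
  have hpow : ((1:ℝ)/2)^n = 1/2^n := by rw [div_pow, one_pow]
  rw [hpow] at hn
  have h1 := key n (lt_of_lt_of_le hn (min_le_right _ _))
  have h2 := lt_of_lt_of_le hn (min_le_left _ _)
  linarith
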